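/- Let n ≥ 2, k ≥ 1, and α ≥ 1 be a real number. Let x_1, …, x_n, z_1, …, z_{n−1}, and y_1, …, y_n be subsets of S such that for every i ∈ {1, …, n−1}: (i) α·Δ^k(z_i | x_1 ∪ … ∪ x_i) ≥ Δ(y_i | x_1 ∪ … ∪ x_i) and (ii) Δ(x_{i+1} | x_1 ∪ … ∪ x_i) ≥ Δ^k(z_i | x_1 ∪ … ∪ x_i), and for every i ∈ {1, …, n}: (iii) Δ(x_i | x_1 ∪ … ∪ x_{i−1}) ≥ Δ(y_i | x_1 ∪ … ∪ x_{i−1}). Then f(x_1 ∪ … ∪ x_n) ≥ f(y_1 ∪ … ∪ y_n) / (2 − 1/(∑_{j=0}^{n−1} α^j)). -/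

import Mathlib

open Finset

variable {α : Type*}

/-- `f` is monotone on finsets. -/
def IsMonotoneFn (f : Finset α → ℝ) : Prop := ∀ A B : Finset α, A ⊆ B → f A ≤ f B

/-- `f` is submodular. -/
def IsSubmodularFn [DecidableEq α] (f : Finset α → ℝ) : Prop :=
  ∀ A B : Finset α, A ⊆ B → ∀ s ∉ B, f (insert s A) - f A ≥ f (insert s B) - f B

/-- Marginal contribution Δ(A|B) = f(A ∪ B) − f(B). -/
def marg [DecidableEq α] (f : Finset α → ℝ) (A B : Finset α) : ℝ := f (A ∪ B) - f B

/-- Δ^l(A|B): best marginal of a subset of `A` of size at most `l`. -/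
noncomputable def margSup [DecidableEq α] (f : Finset α → ℝ) (l : ℕ) (A B : Finset α) : ℝ :=
  (A.powerset.filter (fun C => C.card ≤ l)).sup' ⟨∅, by simp⟩ (fun C => marg f C B)

/-- Union of the first `i` sets: x_0 ∪ ⋯ ∪ x_{i-1}. -/
def pref [DecidableEq α] (x : ℕ → Finset α) (i : ℕ) : Finset α := (Finset.range i).biUnion x

/-- A nominal greedy profile. -/
def NomGreedy [DecidableEq α] (f : Finset α → ℝ) (Ss : ℕ → Finset α) (k n : ℕ)
    (x : ℕ → Finset α) : Prop :=
  ∀ i < n, x i ⊆ Ss i ∧ (x i).card ≤ k ∧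
    ∀ c : Finset α, c ⊆ Ss i → c.card ≤ k → f (c ∪ pref x i) ≤ f (x i ∪ pref x i)

/-- An augmented greedy profile. -/
def AugGreedy [DecidableEq α] (f : Finset α → ℝ) (Ss : ℕ → Finset α) (k m n : ℕ)
    (x z : ℕ → Finset α) : Prop :=
  ∀ i < n,
    (x i ⊆ Ss i ∪ pref z i ∧ (x i).card ≤ k ∧
      ∀ c : Finset α, c ⊆ Ss i ∪ pref z i → c.card ≤ k →
        f (c ∪ pref x i) ≤ f (x i ∪ pref x i)) ∧
    ∃ zk zr : Finset α,
      z i = zk ∪ zr ∧ zk ⊆ Ss i ∧ zk.card ≤ min k m ∧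
      (∀ w : Finset α, w ⊆ Ss i → w.card ≤ min k m →
        marg f w (pref x (i + 1)) ≤ marg f zk (pref x (i + 1))) ∧
      zr ⊆ Ss i ∧ zr.card ≤ m - k

/-- The optimal value OPT(f, (S_i), k) over feasible profiles with n agents. -/
noncomputable def OPTval [DecidableEq α] [Fintype α] (f : Finset α → ℝ) (Ss : ℕ → Finset α)
    (n k : ℕ) : ℝ :=
  ((Finset.univ : Finset (Fin n → Finset α)).filter
      (fun y => ∀ i : Fin n, y i ⊆ Ss (i : ℕ) ∧ (y i).card ≤ k)).sup'
    ⟨(fun _ => ∅), by simp⟩ (fun y => f (Finset.univ.biUnion (fun i => y i)))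

lemma aux_submod_union [DecidableEq α] {f : Finset α → ℝ}
    (hmono : IsMonotoneFn f) (hsub : IsSubmodularFn f) (A : Finset α) :
    ∀ B C : Finset α, B ⊆ C → f (A ∪ C) - f C ≤ f (A ∪ B) - f B := by
  classical
  induction A using Finset.induction_on with
  | empty => intro B C h; simp
  | @insert s A hs ih =>
    intro B C hBC
    have h1 : f (insert s (A ∪ C)) - f (A ∪ C) ≤ f (insert s (A ∪ B)) - f (A ∪ B) := by
      by_cases hsC : s ∈ A ∪ C
      · rw [Finset.insert_eq_self.mpr hsC]
        have := hmono (A ∪ B) (insert s (A ∪ B)) (Finset.subset_insert _ _)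
        linarith
      · exact hsub (A ∪ B) (A ∪ C) (Finset.union_subset_union_right hBC) s hsC
    have h2 := ih B C hBC
    rw [Finset.insert_union, Finset.insert_union]
    linarith

lemma aux_chain_sum (g c : ℕ → ℝ) :
    ∀ N : ℕ, (∀ j < N, g j ≤ g (j + 1) + c j) → g 0 ≤ g N + ∑ j ∈ Finset.range N, c j := by
  intro N
  induction N with
  | zero => intro _; simp
  | succ N ih =>
    intro h
    have h0 := ih (fun j hj => h j (by omega))
    have h1 := h N (by omega)
    rw [Finset.sum_range_succ]
    linarith

lemma aux_numeric (n : ℕ) (a : ℝ) (ha : 1 ≤ a) (d r : ℕ → ℝ) (hd : ∀ i, 0 ≤ d i)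
    (hr : ∀ j, r j = if j + 1 < n then d j - min (d j) (a * d (j + 1)) else d j) :
    ∑ j ∈ Finset.range n, d j ≤ (∑ j ∈ Finset.range n, a ^ j) * ∑ j ∈ Finset.range n, r j := by
  have ha0 : (0:ℝ) ≤ a := le_trans zero_le_one ha
  have hr0 : ∀ j, 0 ≤ r j := by
    intro j; rw [hr]
    split
    · have := min_le_left (d j) (a * d (j + 1)); linarith
    · exact hd j
  have key : ∀ p j, j + p + 1 = n → d j ≤ ∑ t ∈ Finset.Ico j n, a ^ (t - j) * r t := by
    intro p
    induction p with
    | zero =>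
      intro j hj
      have hIco : Finset.Ico j n = {j} := by
        rw [show n = j + 1 by omega]; exact Nat.Ico_succ_singleton j
      rw [hIco, Finset.sum_singleton, hr, if_neg (by omega)]
      simp
    | succ p ih =>
      intro j hj
      have hjn : j + 1 < n := by omega
      have ihj := ih (j + 1) (by omega)
      have hstep : d j ≤ r j + a * d (j + 1) := by
        rw [hr, if_pos hjn]
        have := min_le_right (d j) (a * d (j + 1)); linarith
      have h2 : a * d (j + 1) ≤ ∑ t ∈ Finset.Ico (j + 1) n, a ^ (t - j) * r t := by
        have hm := mul_le_mul_of_nonneg_left ihj ha0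
        rw [Finset.mul_sum] at hm
        refine hm.trans (le_of_eq ?_)
        refine Finset.sum_congr rfl (fun t ht => ?_)
        have htj : j + 1 ≤ t := (Finset.mem_Ico.mp ht).1
        rw [show t - j = (t - (j + 1)) + 1 by omega, pow_succ]
        ring
      rw [Finset.sum_eq_sum_Ico_succ_bot (show j < n by omega)]
      have : a ^ (j - j) * r j = r j := by simp
      rw [this]; linarith
  calc ∑ j ∈ Finset.range n, d j
      ≤ ∑ j ∈ Finset.range n, ∑ t ∈ Finset.Ico j n, a ^ (t - j) * r t := by
        refine Finset.sum_le_sum (fun j hj => ?_)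
        exact key (n - j - 1) j (by have := Finset.mem_range.mp hj; omega)
    _ = ∑ t ∈ Finset.range n, ∑ j ∈ Finset.range (t + 1), a ^ (t - j) * r t := by
        rw [Finset.range_eq_Ico, Finset.sum_Ico_Ico_comm]
        simp only [Finset.range_eq_Ico]
    _ = ∑ t ∈ Finset.range n, (∑ s ∈ Finset.range (t + 1), a ^ s) * r t := by
        refine Finset.sum_congr rfl (fun t _ => ?_)
        have hre := Finset.sum_range_reflect (fun s => a ^ s * r t) (t + 1)
        simp only [Nat.add_sub_cancel] at hre
        rw [Finset.sum_mul]; exact hre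
    _ ≤ ∑ t ∈ Finset.range n, (∑ s ∈ Finset.range n, a ^ s) * r t := by
        refine Finset.sum_le_sum (fun t ht => ?_)
        refine mul_le_mul_of_nonneg_right ?_ (hr0 t)
        refine Finset.sum_le_sum_of_subset_of_nonneg
          (Finset.range_subset_range.mpr (by have := Finset.mem_range.mp ht; omega))
          (fun s _ _ => pow_nonneg ha0 s)
    _ = (∑ j ∈ Finset.range n, a ^ j) * ∑ j ∈ Finset.range n, r j := by
        rw [← Finset.mul_sum]

theorem stmt0 [DecidableEq α] [Fintype α] (f : Finset α → ℝ)
    (hnorm : f ∅ = 0) (hmono : IsMonotoneFn f) (hsub : IsSubmodularFn f)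
    (n k : ℕ) (hn : 2 ≤ n) (hk : 1 ≤ k) (a : ℝ) (ha : 1 ≤ a)
    (x z y : ℕ → Finset α)
    (h1 : ∀ i < n - 1, a * margSup f k (z i) (pref x (i + 1)) ≥ marg f (y i) (pref x (i + 1)))
    (h2 : ∀ i < n - 1, marg f (x (i + 1)) (pref x (i + 1)) ≥ margSup f k (z i) (pref x (i + 1)))
    (h3 : ∀ i < n, marg f (x i) (pref x i) ≥ marg f (y i) (pref x i)) :
    f (pref x n) ≥ f (pref y n) / (2 - 1 / ∑ j ∈ Finset.range n, a ^ j) := by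
  classical
  have ha0 : (0:ℝ) ≤ a := le_trans zero_le_one ha
  -- basic prefix facts
  have pref_zero : ∀ w : ℕ → Finset α, pref w 0 = ∅ := fun w => by simp [pref]
  have pref_succ : ∀ (w : ℕ → Finset α) (i : ℕ), pref w (i + 1) = w i ∪ pref w i := by
    intro w i; simp [pref, Finset.range_add_one, Finset.biUnion_insert]
  have pref_mono : ∀ (w : ℕ → Finset α) (i j : ℕ), i ≤ j → pref w i ⊆ pref w j :=
    fun w i j h => Finset.biUnion_subset_biUnion_of_subset_left _ (Finset.range_subset_range.mpr h)
  -- the increments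
  set d : ℕ → ℝ := fun i => f (pref x (i + 1)) - f (pref x i) with hd
  have hd0 : ∀ i, 0 ≤ d i := by
    intro i
    have := hmono _ _ (pref_mono x i (i + 1) (Nat.le_succ i))
    simp only [hd]; linarith
  have hPsum : ∑ i ∈ Finset.range n, d i = f (pref x n) := by
    simp only [hd]
    rw [Finset.sum_range_sub (fun i => f (pref x i)) n, pref_zero x, hnorm, sub_zero]
  have hdm : ∀ i, marg f (x i) (pref x i) = d i := by
    intro i; simp only [hd, marg, pref_succ x i]
  have hy3 : ∀ i < n, marg f (y i) (pref x i) ≤ d i := by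
    intro i hi; rw [← hdm i]; exact h3 i hi
  have hy1 : ∀ i < n - 1, marg f (y i) (pref x (i + 1)) ≤ a * d (i + 1) := by
    intro i hi
    have hms : margSup f k (z i) (pref x (i + 1)) ≤ d (i + 1) := by
      rw [← hdm (i + 1)]; exact h2 i hi
    calc marg f (y i) (pref x (i + 1)) ≤ a * margSup f k (z i) (pref x (i + 1)) := h1 i hi
      _ ≤ a * d (i + 1) := mul_le_mul_of_nonneg_left hms ha0
  -- the hybrid quantities
  set G : ℕ → ℝ := fun m => f ((Finset.Ico m n).biUnion y ∪ pref x m) with hG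
  have hIco : ∀ m < n, (Finset.Ico m n).biUnion y = y m ∪ (Finset.Ico (m + 1) n).biUnion y := by
    intro m hm
    ext s
    simp only [Finset.mem_biUnion, Finset.mem_Ico, Finset.mem_union]
    constructor
    · rintro ⟨i, ⟨hi1, hi2⟩, hs⟩
      rcases eq_or_lt_of_le hi1 with h | h
      · left; rwa [h]
      · right; exact ⟨i, ⟨by omega, hi2⟩, hs⟩
    · rintro (hs | ⟨i, ⟨hi1, hi2⟩, hs⟩)
      · exact ⟨m, ⟨le_refl m, hm⟩, hs⟩
      · exact ⟨i, ⟨by omega, hi2⟩, hs⟩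
  have step2 : ∀ m < n, G m ≤ f ((Finset.Ico (m + 1) n).biUnion y ∪ pref x m) + d m := by
    intro m hm
    have hGm : G m = f (y m ∪ ((Finset.Ico (m + 1) n).biUnion y ∪ pref x m)) := by
      simp only [hG]
      rw [hIco m hm, Finset.union_assoc]
    have hsb := aux_submod_union hmono hsub (y m) (pref x m)
      ((Finset.Ico (m + 1) n).biUnion y ∪ pref x m) Finset.subset_union_right
    have hmarg := hy3 m hm
    simp only [marg] at hmarg
    rw [hGm]; linarith
  have step2' : ∀ m, m + 1 < n → G m ≤ G (m + 1) + d m := by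
    intro m hm
    have h := step2 m (by omega)
    have hmono' : f ((Finset.Ico (m + 1) n).biUnion y ∪ pref x m)
        ≤ f ((Finset.Ico (m + 1) n).biUnion y ∪ pref x (m + 1)) :=
      hmono _ _ (Finset.union_subset_union_right (pref_mono x m (m + 1) (Nat.le_succ m)))
    simp only [hG] at *
    linarith
  have step1 : ∀ m, m + 1 < n → G m ≤ G (m + 1) + a * d (m + 1) := by
    intro m hm
    have hGm : G m ≤ f (y m ∪ ((Finset.Ico (m + 1) n).biUnion y ∪ pref x (m + 1))) := by
      simp only [hG]
      refine hmono _ _ ?_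
      rw [hIco m (by omega), Finset.union_assoc]
      exact Finset.union_subset_union_right (Finset.union_subset_union_right
        (pref_mono x m (m + 1) (Nat.le_succ m)))
    have hsb := aux_submod_union hmono hsub (y m) (pref x (m + 1))
      ((Finset.Ico (m + 1) n).biUnion y ∪ pref x (m + 1)) Finset.subset_union_right
    have hmarg := hy1 m (by omega)
    simp only [marg] at hmarg
    simp only [hG] at *
    linarith
  have stepc : ∀ m, m + 1 < n → G m ≤ G (m + 1) + min (d m) (a * d (m + 1)) := by
    intro m hm
    rcases le_total (d m) (a * d (m + 1)) with h | h
    · rw [min_eq_left h]; exact step2' m hm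
    · rw [min_eq_right h]; exact step1 m hm
  have stepn : G (n - 1) ≤ f (pref x n) := by
    have h := step2 (n - 1) (by omega)
    have he : Finset.Ico (n - 1 + 1) n = ∅ := by
      rw [show n - 1 + 1 = n by omega]; exact Finset.Ico_self n
    rw [he] at h
    simp only [Finset.biUnion_empty, Finset.empty_union] at h
    have hdn : d (n - 1) = f (pref x (n - 1 + 1)) - f (pref x (n - 1)) := rfl
    rw [show n - 1 + 1 = n by omega] at hdn
    linarith
  -- chain them together
  have hchain := aux_chain_sum G (fun m => min (d m) (a * d (m + 1))) (n - 1)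
    (fun j hj => stepc j (by omega))
  have hG0 : G 0 = f (pref y n) := by
    simp only [hG]
    rw [pref_zero x, Finset.union_empty]
    congr 1
    rw [pref, Finset.range_eq_Ico]
  set M : ℝ := ∑ j ∈ Finset.range (n - 1), min (d j) (a * d (j + 1)) with hM
  have hO : f (pref y n) ≤ f (pref x n) + M := by
    rw [← hG0]
    calc G 0 ≤ G (n - 1) + M := hchain
      _ ≤ f (pref x n) + M := by linarith
  -- numeric part
  set H : ℝ := ∑ j ∈ Finset.range n, a ^ j with hH
  set r : ℕ → ℝ := fun j => if j + 1 < n then d j - min (d j) (a * d (j + 1)) else d j with hr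
  have hnum := aux_numeric n a ha d r hd0 (fun j => rfl)
  have hRsum : ∑ j ∈ Finset.range n, r j = f (pref x n) - M := by
    have hsplit_r := Finset.sum_range_succ r (n - 1)
    have hsplit_d := Finset.sum_range_succ d (n - 1)
    rw [show n - 1 + 1 = n by omega] at hsplit_r hsplit_d
    have hlast : r (n - 1) = d (n - 1) := by
      simp only [hr]; rw [if_neg (by omega)]
    have hin : ∀ j ∈ Finset.range (n - 1), r j = d j - min (d j) (a * d (j + 1)) := by
      intro j hj
      have := Finset.mem_range.mp hj
      simp only [hr]; rw [if_pos (by omega)]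
    rw [hsplit_r, Finset.sum_congr rfl hin, Finset.sum_sub_distrib, hlast]
    linarith [hPsum, hsplit_d, hM]
  have hH1 : (1:ℝ) ≤ H := by
    have h00 : (1:ℝ) = a ^ 0 := by norm_num
    rw [hH, h00]
    refine Finset.single_le_sum (fun j _ => pow_nonneg ha0 j) ?_
    exact Finset.mem_range.mpr (by omega)
  have hHpos : (0:ℝ) < H := by linarith
  have hdivpos : (0:ℝ) < 2 - 1 / H := by
    have : 1 / H ≤ 1 := by rw [div_le_one hHpos]; exact hH1
    linarith
  have hPM : f (pref x n) ≤ H * (f (pref x n) - M) := by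
    rw [← hRsum, ← hPsum]; exact hnum
  have hdiv : f (pref x n) / H ≤ f (pref x n) - M := by
    rw [div_le_iff₀ hHpos]; linarith
  rw [ge_iff_le, div_le_iff₀ hdivpos]
  have hexp : f (pref x n) * (2 - 1 / H) = 2 * f (pref x n) - f (pref x n) / H := by
    ring
  linarith
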